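/- Fix γ > 0 and σ > 0 and set σ̃ := 2σ/γ. Suppose g¹, g², g³, … : [0,∞) → ℝ are differentiable, g¹(t) = 1 for all t ≥ 0, and for every integer n ≥ 2 and all t ≥ 0 one has d/dt gⁿ(t) = (γ/2)·n(n−1)·g^{n−1}(t) − (γ/2)·n·(σ̃+n−1)·gⁿ(t). Then for every integer n ≥ 2 and all t ≥ 0: gⁿ(t) = Γ(n)·Γ(σ̃+1)/Γ(σ̃+n) + n! · Σ_{k=2}^{n} [ binom(n−1, k−1)·(−1)^k·(σ̃+2k−1) / Γ(σ̃+n+k) ] · exp( −k(σ + (γ/2)(k−1))·t ) · ( Σ_{m=2}^{k} [ binom(k−1, m−1)·(−1)^m·Γ(σ̃+k+m−1) / m! ] · g^m(0) − ( (k−1) / ( k·(σ̃+k−1) ) )·Γ(σ̃+k+1) ). -/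

import Mathlib

open Real Finset

namespace FVaux

noncomputable def coef (s : ℝ) (n k : ℕ) : ℝ :=
  (Nat.choose (n - 1) (k - 1) : ℝ) * (-1) ^ k * (s + 2 * k - 1) / Real.Gamma (s + n + k)

noncomputable def dk (s : ℝ) (k m : ℕ) : ℝ :=
  (Nat.choose (k - 1) (m - 1) : ℝ) * (-1) ^ m * Real.Gamma (s + k + m - 1)
    / (Nat.factorial m : ℝ)

noncomputable def ek (s : ℝ) (k : ℕ) : ℝ :=
  ((k : ℝ) - 1) / ((k : ℝ) * (s + (k : ℝ) - 1)) * Real.Gamma (s + k + 1)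

noncomputable def Ak (s : ℝ) (x : ℕ → ℝ) (k : ℕ) : ℝ :=
  (∑ m ∈ Finset.Icc 2 k, dk s k m * x m) - ek s k

noncomputable def G (γ s : ℝ) (x : ℕ → ℝ) (n : ℕ) (t : ℝ) : ℝ :=
  Real.Gamma n * Real.Gamma (s + 1) / Real.Gamma (s + n)
    + (Nat.factorial n : ℝ) * ∑ k ∈ Finset.Icc 2 n,
        coef s n k * Real.exp (-(γ / 2 * k * (s + k - 1)) * t) * Ak s x k

lemma gamma_rec {x : ℝ} (hx : 0 < x) : Real.Gamma (x + 1) = x * Real.Gamma x :=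
  Real.Gamma_add_one (ne_of_gt hx)

lemma gamma_ne {x : ℝ} (hx : 0 < x) : Real.Gamma x ≠ 0 :=
  ne_of_gt (Real.Gamma_pos_of_pos hx)

lemma tele_fwd (f : ℕ → ℝ) (a : ℕ) :
    ∀ n : ℕ, a ≤ n → ∑ k ∈ Finset.Icc a n, (f (k + 1) - f k) = f (n + 1) - f a := by
  intro n hn
  induction n, hn using Nat.le_induction with
  | base => simp
  | succ n hn ih =>
      rw [Finset.sum_Icc_succ_top (by omega), ih]
      ring

lemma tele_bwd (f : ℕ → ℝ) (a : ℕ) :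
    ∀ n : ℕ, a ≤ n → ∑ k ∈ Finset.Icc a n, (f k - f (k - 1)) = f n - f (a - 1) := by
  intro n hn
  induction n, hn using Nat.le_induction with
  | base => simp
  | succ n hn ih =>
      rw [Finset.sum_Icc_succ_top (by omega), ih]
      simp only [Nat.add_sub_cancel]
      ring

lemma choose_real_1 (n k : ℕ) (h1 : 1 ≤ k) (h2 : k ≤ n) :
    (Nat.choose (n - 1) k : ℝ) * k = (Nat.choose (n - 1) (k - 1) : ℝ) * ((n : ℝ) - k) := by
  have h := Nat.choose_succ_right_eq (n - 1) (k - 1)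
  rw [Nat.sub_add_cancel h1] at h
  have h3 : n - 1 - (k - 1) = n - k := by omega
  rw [h3] at h
  have : ((Nat.choose (n - 1) k : ℕ) : ℝ) * ((k : ℕ) : ℝ)
      = ((Nat.choose (n - 1) (k - 1) : ℕ) : ℝ) * ((n - k : ℕ) : ℝ) := by
    exact_mod_cast congrArg (Nat.cast (R := ℝ)) h
  rwa [Nat.cast_sub h2] at this

lemma choose_real_2 (k m : ℕ) (h1 : 1 ≤ m) (h2 : 1 ≤ k) :
    (Nat.choose k (m - 1) : ℝ) * ((k : ℝ) - (m : ℝ) + 1)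
      = (Nat.choose (k - 1) (m - 1) : ℝ) * (k : ℝ) := by
  rcases le_or_gt m k with hmk | hmk
  · have h := Nat.choose_mul_succ_eq (k - 1) (m - 1)
    rw [Nat.sub_add_cancel h2] at h
    have h3 : k - (m - 1) = k - m + 1 := by omega
    rw [h3] at h
    have hc : ((Nat.choose (k - 1) (m - 1) : ℕ) : ℝ) * ((k : ℕ) : ℝ)
        = ((Nat.choose k (m - 1) : ℕ) : ℝ) * ((k - m + 1 : ℕ) : ℝ) := by
      exact_mod_cast congrArg (Nat.cast (R := ℝ)) h
    rw [Nat.cast_add, Nat.cast_sub hmk] at hc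
    push_cast at hc ⊢
    linarith
  · rcases Nat.lt_or_ge (k + 1) m with hm2 | hm2
    · rw [Nat.choose_eq_zero_of_lt (by omega), Nat.choose_eq_zero_of_lt (by omega)]
      ring
    · have hm : m = k + 1 := by omega
      subst hm
      simp only [Nat.add_sub_cancel, Nat.choose_self]
      rw [Nat.choose_eq_zero_of_lt (by omega)]
      push_cast
      ring

lemma choose_real_3 (n k : ℕ) (h1 : 2 ≤ k) (h2 : k ≤ n) :
    (Nat.choose (n - 1) (k - 1) : ℝ) * ((k : ℝ) - 1)
      = (Nat.choose (n - 1) (k - 2) : ℝ) * ((n : ℝ) - (k : ℝ) + 1) := by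
  have h := Nat.choose_succ_right_eq (n - 1) (k - 2)
  have h3 : k - 2 + 1 = k - 1 := by omega
  have h4 : n - 1 - (k - 2) = n - k + 1 := by omega
  rw [h3, h4] at h
  have hc : ((Nat.choose (n - 1) (k - 1) : ℕ) : ℝ) * ((k - 1 : ℕ) : ℝ)
      = ((Nat.choose (n - 1) (k - 2) : ℕ) : ℝ) * ((n - k + 1 : ℕ) : ℝ) := by
    exact_mod_cast congrArg (Nat.cast (R := ℝ)) h
  rw [Nat.cast_sub (by omega), Nat.cast_add, Nat.cast_sub h2] at hc
  push_cast at hc ⊢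
  linarith

lemma choose_real_4 (n k : ℕ) (h1 : 1 ≤ k) (h2 : k ≤ n) (hn : 2 ≤ n) :
    ((n : ℝ) - k) * (Nat.choose (n - 1) (k - 1) : ℝ)
      = ((n : ℝ) - 1) * (Nat.choose (n - 2) (k - 1) : ℝ) := by
  have h := Nat.choose_mul_succ_eq (n - 2) (k - 1)
  have h3 : n - 2 + 1 = n - 1 := by omega
  rw [h3] at h
  have h4 : n - 1 - (k - 1) = n - k := by omega
  rw [h4] at h
  have hc : ((Nat.choose (n - 2) (k - 1) : ℕ) : ℝ) * ((n - 1 : ℕ) : ℝ)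
      = ((Nat.choose (n - 1) (k - 1) : ℕ) : ℝ) * ((n - k : ℕ) : ℝ) := by
    exact_mod_cast congrArg (Nat.cast (R := ℝ)) h
  rw [Nat.cast_sub (by omega), Nat.cast_sub h2] at hc
  push_cast at hc ⊢
  linarith

lemma choose_combo (n k m : ℕ) (hk : 1 ≤ k) (hkn : k ≤ n) (hm : 1 ≤ m) :
    ((k : ℝ) + 1 - m) * (Nat.choose (n - 1) k : ℝ) * (Nat.choose k (m - 1) : ℝ)
      = ((n : ℝ) - k) * (Nat.choose (n - 1) (k - 1) : ℝ) * (Nat.choose (k - 1) (m - 1) : ℝ) := by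
  have h2 := choose_real_2 k m hm hk
  have h1 := choose_real_1 n k hk hkn
  have : ((k : ℝ) + 1 - m) * (Nat.choose k (m - 1) : ℝ)
      = (Nat.choose (k - 1) (m - 1) : ℝ) * (k : ℝ) := by linarith [h2]
  calc ((k : ℝ) + 1 - m) * (Nat.choose (n - 1) k : ℝ) * (Nat.choose k (m - 1) : ℝ)
      = (((k : ℝ) + 1 - m) * (Nat.choose k (m - 1) : ℝ)) * (Nat.choose (n - 1) k : ℝ) := by ring
    _ = (Nat.choose (k - 1) (m - 1) : ℝ) * ((Nat.choose (n - 1) k : ℝ) * (k : ℝ)) := by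
        rw [this]; ring
    _ = (Nat.choose (k - 1) (m - 1) : ℝ) * ((Nat.choose (n - 1) (k - 1) : ℝ) * ((n : ℝ) - k)) := by
        rw [h1]
    _ = ((n : ℝ) - k) * (Nat.choose (n - 1) (k - 1) : ℝ) * (Nat.choose (k - 1) (m - 1) : ℝ) := by
        ring

noncomputable def TA (s : ℝ) (n m k : ℕ) : ℝ :=
  (-1) ^ (k + m + 1) * ((k : ℝ) - m) * (Nat.choose (n - 1) (k - 1) : ℝ)
      * (Nat.choose (k - 1) (m - 1) : ℝ) * Real.Gamma (s + k + m - 1)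
    / (((n : ℝ) - m) * (Nat.factorial m : ℝ) * Real.Gamma (s + n + k - 1))

lemma perkA {s : ℝ} (hs : 0 < s) (n m k : ℕ) (hm : 2 ≤ m) (hmn : m < n)
    (hk : 2 ≤ k) (hkn : k ≤ n) :
    coef s n k * dk s k m = TA s n m (k + 1) - TA s n m k := by
  have hk2 : (2 : ℝ) ≤ (k : ℝ) := by exact_mod_cast hk
  have hm2 : (2 : ℝ) ≤ (m : ℝ) := by exact_mod_cast hm
  have hn2 : (m : ℝ) < (n : ℝ) := by exact_mod_cast hmn
  have hΓ1pos : 0 < s + k + m - 1 := by linarith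
  have hΓ2pos : 0 < s + n + k - 1 := by linarith
  have hΓ1 : Real.Gamma (s + k + m - 1) ≠ 0 := gamma_ne (by linarith)
  have hΓ2 : Real.Gamma (s + n + k - 1) ≠ 0 := gamma_ne (by linarith)
  have hfm : (Nat.factorial m : ℝ) ≠ 0 := by exact_mod_cast (Nat.factorial_pos m).ne'
  have hNM : (n : ℝ) - m ≠ 0 := by linarith
  -- rewrite TA (k+1) into base form
  have hTA1 : TA s n m (k + 1)
      = (-1) ^ (k + m) * ((n : ℝ) - k) * (Nat.choose (n - 1) (k - 1) : ℝ)
          * (Nat.choose (k - 1) (m - 1) : ℝ)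
          * ((s + k + m - 1) * Real.Gamma (s + k + m - 1))
        / (((n : ℝ) - m) * (Nat.factorial m : ℝ)
            * ((s + n + k - 1) * Real.Gamma (s + n + k - 1))) := by
    unfold TA
    simp only [Nat.add_sub_cancel]
    push_cast
    rw [show s + ((k : ℝ) + 1) + m - 1 = (s + k + m - 1) + 1 by ring,
      gamma_rec hΓ1pos,
      show s + (n : ℝ) + ((k : ℝ) + 1) - 1 = (s + n + k - 1) + 1 by ring,
      gamma_rec hΓ2pos]
    rw [div_eq_div_iff (by positivity) (by positivity)]
    have combo := choose_combo n k m (by omega) hkn (by omega)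
    have hsgn : ((-1 : ℝ)) ^ (k + 1 + m + 1) = (-1) ^ (k + m) := by
      rw [show k + 1 + m + 1 = (k + m) + 2 by ring, pow_add]
      norm_num
    rw [hsgn]
    linear_combination ((-1 : ℝ)) ^ (k + m) * ((s + (k:ℝ) + m - 1) * Real.Gamma (s + k + m - 1))
      * (((n : ℝ) - m) * (Nat.factorial m : ℝ) * ((s + (n:ℝ) + k - 1) * Real.Gamma (s + n + k - 1))) * combo
  rw [hTA1]
  unfold coef dk TA
  rw [show s + (n : ℝ) + k = (s + n + k - 1) + 1 by ring, gamma_rec hΓ2pos]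
  have hsgn2 : ((-1 : ℝ)) ^ (k + m + 1) = -((-1) ^ (k + m)) := by
    rw [pow_succ]; ring
  have hsgn3 : ((-1 : ℝ)) ^ (k + m) = (-1 : ℝ) ^ k * (-1) ^ m := by rw [pow_add]
  rw [hsgn2, hsgn3]
  rw [show s + (n : ℝ) + k - 1 + 1 - 1 = s + n + k - 1 by ring]
  field_simp
  ring

lemma sumA {s : ℝ} (hs : 0 < s) (n m : ℕ) (hm : 2 ≤ m) (hmn : m < n) :
    ∑ k ∈ Finset.Icc 2 n, coef s n k * dk s k m = 0 := by
  have h1 : ∑ k ∈ Finset.Icc 2 n, coef s n k * dk s k m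
      = ∑ k ∈ Finset.Icc 2 n, (TA s n m (k + 1) - TA s n m k) := by
    apply Finset.sum_congr rfl
    intro k hk
    rw [Finset.mem_Icc] at hk
    exact perkA hs n m k hm hmn hk.1 hk.2
  rw [h1, tele_fwd (TA s n m) 2 n (by omega)]
  have hTAn : TA s n m (n + 1) = 0 := by
    unfold TA
    rw [Nat.add_sub_cancel, Nat.choose_eq_zero_of_lt (by omega)]
    simp
  have hTA2 : TA s n m 2 = 0 := by
    unfold TA
    rcases eq_or_lt_of_le hm with h | h
    · rw [← h]
      norm_num
    · rw [show Nat.choose (2 - 1) (m - 1) = 0 from Nat.choose_eq_zero_of_lt (by omega)]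
      simp
  rw [hTAn, hTA2, sub_zero]

lemma sumA_diag {s : ℝ} (hs : 0 < s) (n : ℕ) (hn : 2 ≤ n) :
    ∑ k ∈ Finset.Icc 2 n, coef s n k * dk s k n = 1 / (Nat.factorial n : ℝ) := by
  have hn2 : (2 : ℝ) ≤ (n : ℝ) := by exact_mod_cast hn
  rw [Finset.sum_eq_single_of_mem n (Finset.mem_Icc.mpr ⟨hn, le_refl n⟩)]
  · unfold coef dk
    have hpos : 0 < s + n + n - 1 := by linarith
    have hΓ : Real.Gamma (s + n + n - 1) ≠ 0 := gamma_ne hpos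
    rw [show s + (n : ℝ) + n = (s + n + n - 1) + 1 by ring, gamma_rec hpos]
    rw [Nat.choose_self]
    have hfm : (Nat.factorial n : ℝ) ≠ 0 := by exact_mod_cast (Nat.factorial_pos n).ne'
    have hsq : ((-1 : ℝ)) ^ n * (-1) ^ n = 1 := by
      rw [← pow_add, ← two_mul, pow_mul]; norm_num
    rw [show s + (n : ℝ) + n - 1 + 1 - 1 = s + n + n - 1 by ring]
    field_simp [hfm]
    linear_combination (s + 2 * (n : ℝ) - 1) * hsq
  · intro k hk hkn
    rw [Finset.mem_Icc] at hk
    unfold dk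
    rw [Nat.choose_eq_zero_of_lt (by omega)]
    simp

noncomputable def TB (s : ℝ) (n k : ℕ) : ℝ :=
  (-1) ^ k * ((n : ℝ) - k) * ((n : ℝ) * k ^ 2 + (n : ℝ) * s * k - ((n : ℝ) - 1) * s)
      * (Nat.choose (n - 1) (k - 1) : ℝ) * Real.Gamma (s + k)
    / ((n : ℝ) * ((n : ℝ) - 1) * k * Real.Gamma (s + n + k))

set_option maxHeartbeats 1000000 in
lemma perkB {s : ℝ} (hs : 0 < s) (n k : ℕ) (hn : 2 ≤ n) (hk : 2 ≤ k) (hkn : k ≤ n) :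
    coef s n k * ek s k = TB s n k - TB s n (k - 1) := by
  have hk2 : (2 : ℝ) ≤ (k : ℝ) := by exact_mod_cast hk
  have hn2 : (2 : ℝ) ≤ (n : ℝ) := by exact_mod_cast hn
  have hknR : (k : ℝ) ≤ (n : ℝ) := by exact_mod_cast hkn
  have hc3 : (Nat.choose (n - 1) (k - 2) : ℝ)
      = (Nat.choose (n - 1) (k - 1) : ℝ) * ((k : ℝ) - 1) / ((n : ℝ) - (k : ℝ) + 1) := by
    rw [choose_real_3 n k hk hkn, mul_div_assoc,
      div_self (by linarith : (n : ℝ) - (k : ℝ) + 1 ≠ 0), mul_one]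
  have hp1 : 0 < s + (k : ℝ) - 1 := by linarith
  have hp2 : 0 < s + (k : ℝ) := by linarith
  have hp3 : 0 < s + (n : ℝ) + (k : ℝ) - 1 := by linarith
  have hΓ3 : Real.Gamma (s + (k : ℝ) - 1) ≠ 0 := gamma_ne hp1
  have hΓ4 : Real.Gamma (s + (n : ℝ) + (k : ℝ) - 1) ≠ 0 := gamma_ne hp3
  have hcast1 : ((k - 1 : ℕ) : ℝ) = (k : ℝ) - 1 := by
    rw [Nat.cast_sub (by omega)]; norm_num
  unfold coef ek TB
  rw [show k - 1 - 1 = k - 2 from by omega]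
  rw [hcast1, hc3]
  rw [gamma_rec hp2]
  rw [show s + (n : ℝ) + ((k : ℝ) - 1) = s + (n : ℝ) + (k : ℝ) - 1 by ring]
  rw [show s + ((k : ℝ) - 1) = s + (k : ℝ) - 1 by ring]
  have hg1 : Real.Gamma (s + (n : ℝ) + (k : ℝ))
      = (s + (n : ℝ) + (k : ℝ) - 1) * Real.Gamma (s + (n : ℝ) + (k : ℝ) - 1) := by
    conv_lhs => rw [show s + (n : ℝ) + (k : ℝ) = (s + (n : ℝ) + (k : ℝ) - 1) + 1 by ring]
    exact gamma_rec hp3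
  have hg2 : Real.Gamma (s + (k : ℝ))
      = (s + (k : ℝ) - 1) * Real.Gamma (s + (k : ℝ) - 1) := by
    conv_lhs => rw [show s + (k : ℝ) = (s + (k : ℝ) - 1) + 1 by ring]
    exact gamma_rec hp1
  rw [hg1, hg2]
  have hsgn : ((-1 : ℝ)) ^ (k - 1) * (-1) = (-1) ^ k := by
    rw [← pow_succ, show (k - 1) + 1 = k from by omega]
  rw [← hsgn]
  have e1 : (n : ℝ) - (k : ℝ) + 1 ≠ 0 := by linarith
  have e2 : (k : ℝ) ≠ 0 := by linarith
  have e3 : (k : ℝ) - 1 ≠ 0 := by linarith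
  have e4 : (n : ℝ) ≠ 0 := by linarith
  have e5 : (n : ℝ) - 1 ≠ 0 := by linarith
  have e6 : s + (k : ℝ) - 1 ≠ 0 := ne_of_gt hp1
  field_simp
  ring

lemma sumB {s : ℝ} (hs : 0 < s) (n : ℕ) (hn : 2 ≤ n) :
    ∑ k ∈ Finset.Icc 2 n, coef s n k * ek s k
      = Real.Gamma (s + 1) / ((n : ℝ) * Real.Gamma (s + n)) := by
  have hn2 : (2 : ℝ) ≤ (n : ℝ) := by exact_mod_cast hn
  have h1 : ∑ k ∈ Finset.Icc 2 n, coef s n k * ek s k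
      = ∑ k ∈ Finset.Icc 2 n, (TB s n k - TB s n (k - 1)) := by
    apply Finset.sum_congr rfl
    intro k hk
    rw [Finset.mem_Icc] at hk
    exact perkB hs n k hn hk.1 hk.2
  rw [h1, tele_bwd (TB s n) 2 n hn]
  have hTBn : TB s n n = 0 := by
    unfold TB
    simp
  have hTB1 : TB s n (2 - 1) = -(Real.Gamma (s + 1) / ((n : ℝ) * Real.Gamma (s + n))) := by
    show TB s n 1 = _
    unfold TB
    norm_num
    rw [gamma_rec (by linarith : (0:ℝ) < s + n)]
    have e4 : (n : ℝ) ≠ 0 := by linarith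
    have e5 : (n : ℝ) - 1 ≠ 0 := by linarith
    have e6 : s + (n : ℝ) ≠ 0 := by linarith
    have hΓ : Real.Gamma (s + (n : ℝ)) ≠ 0 := gamma_ne (by linarith)
    field_simp
    ring
  rw [hTBn, hTB1]
  ring

lemma gamma_nat (n : ℕ) (hn : 1 ≤ n) :
    Real.Gamma (n : ℝ) = (Nat.factorial (n - 1) : ℝ) := by
  obtain ⟨p, rfl⟩ : ∃ p, n = p + 1 := ⟨n - 1, by omega⟩
  rw [Nat.add_sub_cancel]
  push_cast
  exact_mod_cast Real.Gamma_nat_eq_factorial p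

lemma G_init {γ s : ℝ} (hs : 0 < s) (x : ℕ → ℝ) (n : ℕ) (hn : 2 ≤ n) :
    G γ s x n 0 = x n := by
  have hn2 : (2 : ℝ) ≤ (n : ℝ) := by exact_mod_cast hn
  unfold G Ak
  simp only [mul_zero, neg_zero, zero_mul, Real.exp_zero, mul_one]
  have hext : ∀ k ∈ Finset.Icc 2 n,
      coef s n k * ((∑ m ∈ Finset.Icc 2 k, dk s k m * x m) - ek s k)
        = coef s n k * ((∑ m ∈ Finset.Icc 2 n, dk s k m * x m) - ek s k) := by
    intro k hk
    rw [Finset.mem_Icc] at hk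
    congr 2
    apply Finset.sum_subset (Finset.Icc_subset_Icc_right hk.2)
    intro m hm hnot
    rw [Finset.mem_Icc] at hm
    simp only [Finset.mem_Icc, not_and, not_le] at hnot
    have hkm : k < m := hnot hm.1
    unfold dk
    rw [Nat.choose_eq_zero_of_lt (by omega)]
    simp
  rw [Finset.sum_congr rfl hext]
  have hsplit : ∑ k ∈ Finset.Icc 2 n,
      coef s n k * ((∑ m ∈ Finset.Icc 2 n, dk s k m * x m) - ek s k)
      = (∑ k ∈ Finset.Icc 2 n, ∑ m ∈ Finset.Icc 2 n, coef s n k * dk s k m * x m)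
        - ∑ k ∈ Finset.Icc 2 n, coef s n k * ek s k := by
    rw [← Finset.sum_sub_distrib]
    apply Finset.sum_congr rfl
    intro k _
    rw [mul_sub, Finset.mul_sum]
    congr 1
    apply Finset.sum_congr rfl
    intro m _
    ring
  rw [hsplit, Finset.sum_comm, sumB hs n hn]
  have hswap : ∑ m ∈ Finset.Icc 2 n, ∑ k ∈ Finset.Icc 2 n, coef s n k * dk s k m * x m
      = x n / (Nat.factorial n : ℝ) := by
    rw [Finset.sum_eq_single_of_mem n (Finset.mem_Icc.mpr ⟨hn, le_refl n⟩)]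
    · rw [← Finset.sum_mul, sumA_diag hs n hn]
      ring
    · intro m hm hmn
      rw [Finset.mem_Icc] at hm
      rw [← Finset.sum_mul, sumA hs n m hm.1 (by omega)]
      ring
  rw [hswap]
  have hfact : (Nat.factorial n : ℝ) = (n : ℝ) * (Nat.factorial (n - 1) : ℝ) := by
    obtain ⟨p, rfl⟩ : ∃ p, n = p + 1 := ⟨n - 1, by omega⟩
    rw [Nat.add_sub_cancel, Nat.factorial_succ]
    push_cast
    ring
  rw [gamma_nat n (by omega), hfact]
  have e1 : (n : ℝ) ≠ 0 := by linarith
  have e2 : (Nat.factorial (n - 1) : ℝ) ≠ 0 := by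
    exact_mod_cast (Nat.factorial_pos (n - 1)).ne'
  have e3 : Real.Gamma (s + n) ≠ 0 := gamma_ne (by linarith)
  field_simp
  ring

lemma perk_ode {γ s : ℝ} (hs : 0 < s) (n k : ℕ) (hn : 2 ≤ n) (hk : 2 ≤ k) (hkn : k ≤ n) :
    (Nat.factorial n : ℝ) * coef s n k * (-(γ / 2 * k * (s + k - 1)))
      = γ / 2 * n * ((n : ℝ) - 1) * ((Nat.factorial (n - 1) : ℝ) * coef s (n - 1) k)
        - γ / 2 * n * (s + n - 1) * ((Nat.factorial n : ℝ) * coef s n k) := by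
  have hk2 : (2 : ℝ) ≤ (k : ℝ) := by exact_mod_cast hk
  have hn2 : (2 : ℝ) ≤ (n : ℝ) := by exact_mod_cast hn
  have hknR : (k : ℝ) ≤ (n : ℝ) := by exact_mod_cast hkn
  have hp3 : 0 < s + (n : ℝ) + (k : ℝ) - 1 := by linarith
  have hΓ : Real.Gamma (s + (n : ℝ) + (k : ℝ) - 1) ≠ 0 := gamma_ne hp3
  have hcast : ((n - 1 : ℕ) : ℝ) = (n : ℝ) - 1 := by
    rw [Nat.cast_sub (by omega)]; norm_num
  have hfact : (Nat.factorial n : ℝ) = (n : ℝ) * (Nat.factorial (n - 1) : ℝ) := by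
    obtain ⟨p, rfl⟩ : ∃ p, n = p + 1 := ⟨n - 1, by omega⟩
    rw [Nat.add_sub_cancel, Nat.factorial_succ]; push_cast; ring
  have hchoose := choose_real_4 n k (by omega) hkn hn
  unfold coef
  rw [show n - 1 - 1 = n - 2 from by omega]
  rw [hcast, hfact]
  rw [show s + ((n : ℝ) - 1) + (k : ℝ) = s + (n : ℝ) + (k : ℝ) - 1 by ring]
  have hg1 : Real.Gamma (s + (n : ℝ) + (k : ℝ))
      = (s + (n : ℝ) + (k : ℝ) - 1) * Real.Gamma (s + (n : ℝ) + (k : ℝ) - 1) := by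
    conv_lhs => rw [show s + (n : ℝ) + (k : ℝ) = (s + (n : ℝ) + (k : ℝ) - 1) + 1 by ring]
    exact gamma_rec hp3
  rw [hg1]
  have e5 : (n : ℝ) - 1 ≠ 0 := by linarith
  have e6 : s + (n : ℝ) + (k : ℝ) - 1 ≠ 0 := ne_of_gt hp3
  have hc2 : (Nat.choose (n - 2) (k - 1) : ℝ)
      = ((n : ℝ) - (k : ℝ)) * (Nat.choose (n - 1) (k - 1) : ℝ) / ((n : ℝ) - 1) := by
    rw [eq_div_iff e5]
    linarith [hchoose]
  rw [hc2]
  field_simp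
  ring

lemma const_ode {γ s : ℝ} (hs : 0 < s) (n : ℕ) (hn : 2 ≤ n) :
    γ / 2 * n * ((n : ℝ) - 1)
        * (Real.Gamma ((n - 1 : ℕ) : ℝ) * Real.Gamma (s + 1) / Real.Gamma (s + ((n - 1 : ℕ) : ℝ)))
      - γ / 2 * n * (s + n - 1)
        * (Real.Gamma (n : ℝ) * Real.Gamma (s + 1) / Real.Gamma (s + n)) = 0 := by
  have hn2 : (2 : ℝ) ≤ (n : ℝ) := by exact_mod_cast hn
  have hcast : ((n - 1 : ℕ) : ℝ) = (n : ℝ) - 1 := by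
    rw [Nat.cast_sub (by omega)]; norm_num
  rw [hcast]
  have hg1 : Real.Gamma (n : ℝ) = ((n : ℝ) - 1) * Real.Gamma ((n : ℝ) - 1) := by
    conv_lhs => rw [show (n : ℝ) = ((n : ℝ) - 1) + 1 by ring]
    exact gamma_rec (by linarith)
  have hg2 : Real.Gamma (s + (n : ℝ)) = (s + (n : ℝ) - 1) * Real.Gamma (s + (n : ℝ) - 1) := by
    conv_lhs => rw [show s + (n : ℝ) = (s + (n : ℝ) - 1) + 1 by ring]
    exact gamma_rec (by linarith)
  rw [hg1, hg2, show s + ((n : ℝ) - 1) = s + (n : ℝ) - 1 by ring]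
  have e1 : Real.Gamma (s + (n : ℝ) - 1) ≠ 0 := gamma_ne (by linarith)
  have e2 : s + (n : ℝ) - 1 ≠ 0 := by linarith
  field_simp
  ring

lemma G_hasDeriv {γ s : ℝ} (hs : 0 < s) (x : ℕ → ℝ) (n : ℕ) (hn : 2 ≤ n) (t : ℝ) :
    HasDerivAt (G γ s x n)
      (γ / 2 * n * ((n : ℝ) - 1) * G γ s x (n - 1) t
        - γ / 2 * n * (s + n - 1) * G γ s x n t) t := by
  have hderiv : HasDerivAt (G γ s x n)
      ((Nat.factorial n : ℝ) * ∑ k ∈ Finset.Icc 2 n,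
        coef s n k * (Real.exp (-(γ / 2 * k * (s + k - 1)) * t) * (-(γ / 2 * k * (s + k - 1))))
          * Ak s x k) t := by
    unfold G
    apply HasDerivAt.const_add
    apply HasDerivAt.const_mul
    apply HasDerivAt.fun_sum
    intro k _
    have h1 : HasDerivAt (fun u : ℝ => -(γ / 2 * k * (s + k - 1)) * u)
        (-(γ / 2 * k * (s + k - 1))) t := by
      simpa using (hasDerivAt_id t).const_mul (-(γ / 2 * (k : ℝ) * (s + k - 1)))
    exact ((h1.exp.const_mul (coef s n k)).mul_const (Ak s x k))
  convert hderiv using 1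
  unfold G
  have hext : ∑ k ∈ Finset.Icc 2 (n - 1),
      coef s (n - 1) k * Real.exp (-(γ / 2 * k * (s + k - 1)) * t) * Ak s x k
      = ∑ k ∈ Finset.Icc 2 n,
      coef s (n - 1) k * Real.exp (-(γ / 2 * k * (s + k - 1)) * t) * Ak s x k := by
    apply Finset.sum_subset (Finset.Icc_subset_Icc_right (by omega))
    intro k hk hnot
    simp only [Finset.mem_Icc, not_and, not_le] at hk hnot
    have hk' : n - 1 < k := hnot hk.1
    unfold coef
    rw [Nat.choose_eq_zero_of_lt (by omega)]
    simp
  rw [hext]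
  have h2 : ∀ k ∈ Finset.Icc 2 n,
      (Nat.factorial n : ℝ) * (coef s n k
          * (Real.exp (-(γ / 2 * k * (s + k - 1)) * t) * (-(γ / 2 * k * (s + k - 1))))
          * Ak s x k)
        = γ / 2 * n * ((n : ℝ) - 1) * ((Nat.factorial (n - 1) : ℝ)
              * (coef s (n - 1) k * Real.exp (-(γ / 2 * k * (s + k - 1)) * t) * Ak s x k))
          - γ / 2 * n * (s + n - 1) * ((Nat.factorial n : ℝ)
              * (coef s n k * Real.exp (-(γ / 2 * k * (s + k - 1)) * t) * Ak s x k)) := by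
    intro k hk
    rw [Finset.mem_Icc] at hk
    linear_combination (Real.exp (-(γ / 2 * k * (s + k - 1)) * t) * Ak s x k)
      * perk_ode (γ := γ) hs n k hn hk.1 hk.2
  have hsum : (Nat.factorial n : ℝ) * ∑ k ∈ Finset.Icc 2 n, (coef s n k
          * (Real.exp (-(γ / 2 * k * (s + k - 1)) * t) * (-(γ / 2 * k * (s + k - 1))))
          * Ak s x k)
      = γ / 2 * n * ((n : ℝ) - 1) * ((Nat.factorial (n - 1) : ℝ)
            * ∑ k ∈ Finset.Icc 2 n,
              (coef s (n - 1) k * Real.exp (-(γ / 2 * k * (s + k - 1)) * t) * Ak s x k))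
        - γ / 2 * n * (s + n - 1) * ((Nat.factorial n : ℝ)
            * ∑ k ∈ Finset.Icc 2 n,
              (coef s n k * Real.exp (-(γ / 2 * k * (s + k - 1)) * t) * Ak s x k)) := by
    rw [Finset.mul_sum, Finset.sum_congr rfl h2, Finset.sum_sub_distrib]
    simp only [Finset.mul_sum]
  have hc := const_ode (γ := γ) hs n hn
  linear_combination hc - hsum

lemma G_one {γ s : ℝ} (hs : 0 < s) (x : ℕ → ℝ) (t : ℝ) : G γ s x 1 t = 1 := by
  unfold G
  rw [Finset.Icc_eq_empty (by omega)]
  rw [Finset.sum_empty, Nat.cast_one, Real.Gamma_one, one_mul, mul_zero, add_zero]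
  exact div_self (gamma_ne (by linarith))

lemma main_sol {γ σ : ℝ} (hγ : 0 < γ) (hσ : 0 < σ) (g : ℕ → ℝ → ℝ)
    (hg1 : ∀ t : ℝ, 0 ≤ t → g 1 t = 1)
    (hode : ∀ n : ℕ, 2 ≤ n → ∀ t : ℝ, 0 ≤ t →
      HasDerivWithinAt (g n)
        (γ / 2 * (n : ℝ) * ((n : ℝ) - 1) * g (n - 1) t
          - γ / 2 * (n : ℝ) * (2 * σ / γ + (n : ℝ) - 1) * g n t)
        (Set.Ici 0) t) :
    ∀ n : ℕ, 1 ≤ n → ∀ t : ℝ, 0 ≤ t → g n t = G γ (2 * σ / γ) (fun m => g m 0) n t := by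
  have hs : 0 < 2 * σ / γ := by positivity
  intro n hn
  induction n, hn using Nat.le_induction with
  | base =>
      intro t ht
      rw [hg1 t ht, G_one hs]
  | succ n hn ih =>
      intro t ht
      set s : ℝ := 2 * σ / γ with hsdef
      set x : ℕ → ℝ := fun m => g m 0 with hxdef
      set c : ℝ := γ / 2 * ((n : ℝ) + 1) * (s + ((n : ℝ) + 1) - 1) with hcdef
      have hh : ∀ u : ℝ, 0 ≤ u →
          HasDerivWithinAt (fun v => g (n + 1) v - G γ s x (n + 1) v)
            (-c * (g (n + 1) u - G γ s x (n + 1) u)) (Set.Ici 0) u := by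
        intro u hu
        have h1 := hode (n + 1) (by omega) u hu
        have h2 := (G_hasDeriv (γ := γ) hs x (n + 1) (by omega) u).hasDerivWithinAt
          (s := Set.Ici (0 : ℝ))
        have h3 := h1.sub h2
        simp only [Nat.add_sub_cancel] at h3
        convert h3 using 1 <;> try rfl
        rw [ih u hu]
        push_cast
        ring
      have hφ : ∀ u : ℝ, 0 ≤ u →
          HasDerivWithinAt (fun v => Real.exp (c * v) * (g (n + 1) v - G γ s x (n + 1) v))
            0 (Set.Ici 0) u := by
        intro u hu
        have he : HasDerivAt (fun v : ℝ => Real.exp (c * v)) (Real.exp (c * u) * c) u := by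
          simpa using ((hasDerivAt_id u).const_mul c).exp
        have hmul := he.hasDerivWithinAt.mul (hh u hu)
        convert hmul using 1 <;> try rfl
        ring
      have key := constant_of_has_deriv_right_zero
        (f := fun v => Real.exp (c * v) * (g (n + 1) v - G γ s x (n + 1) v))
        (a := 0) (b := t)
        (fun u hu => ((hφ u hu.1).continuousWithinAt).mono (fun y hy => hy.1))
        (fun u hu => (hφ u hu.1).mono (Set.Ici_subset_Ici.mpr hu.1))
      have hkt := key t ⟨ht, le_refl t⟩
      have h0 : g (n + 1) 0 - G γ s x (n + 1) 0 = 0 := by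
        rw [G_init hs x (n + 1) (by omega)]
        simp [hxdef]
      simp only [mul_zero, Real.exp_zero, h0, one_mul] at hkt
      have hexp : Real.exp (c * t) ≠ 0 := Real.exp_ne_zero _
      have := mul_eq_zero.mp hkt
      rcases this with h | h
      · exact absurd h hexp
      · linarith [sub_eq_zero.mp h]

end FVaux

/-- Explicit solution of the ODE system for the mean sample Laplace transforms of subtree
lengths under the tree-valued Fleming–Viot dynamics with resampling rate `γ`:
if `g¹ ≡ 1` and `d/dt gⁿ = (γ/2)n(n−1)g^{n−1} − (γ/2)n(σ̃+n−1)gⁿ` on `[0,∞)` for all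
`n ≥ 2`, where `σ̃ = 2σ/γ`, then `gⁿ(t)` is given by the stated closed formula. -/
theorem meanSampleLaplace_explicit_solution
    (γ σ : ℝ) (hγ : 0 < γ) (hσ : 0 < σ)
    (g : ℕ → ℝ → ℝ)
    (hg1 : ∀ t : ℝ, 0 ≤ t → g 1 t = 1)
    (hode : ∀ n : ℕ, 2 ≤ n → ∀ t : ℝ, 0 ≤ t →
      HasDerivWithinAt (g n)
        (γ / 2 * (n : ℝ) * ((n : ℝ) - 1) * g (n - 1) t
          - γ / 2 * (n : ℝ) * (2 * σ / γ + (n : ℝ) - 1) * g n t)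
        (Set.Ici 0) t)
    (n : ℕ) (hn : 2 ≤ n) (t : ℝ) (ht : 0 ≤ t) :
    g n t
      = Real.Gamma n * Real.Gamma (2 * σ / γ + 1) / Real.Gamma (2 * σ / γ + n)
        + (Nat.factorial n : ℝ) *
          ∑ k ∈ Finset.Icc 2 n,
            ((Nat.choose (n - 1) (k - 1) : ℝ) * (-1) ^ k * (2 * σ / γ + 2 * k - 1)
                / Real.Gamma (2 * σ / γ + n + k))
              * Real.exp (-((k : ℝ) * (σ + γ / 2 * ((k : ℝ) - 1))) * t)
              * ((∑ m ∈ Finset.Icc 2 k,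
                    ((Nat.choose (k - 1) (m - 1) : ℝ) * (-1) ^ m
                        * Real.Gamma (2 * σ / γ + k + m - 1) / (Nat.factorial m : ℝ))
                      * g m 0)
                  - ((k : ℝ) - 1) / ((k : ℝ) * (2 * σ / γ + (k : ℝ) - 1))
                      * Real.Gamma (2 * σ / γ + k + 1)) := by
  have hmain := FVaux.main_sol hγ hσ g hg1 hode n (by omega) t ht
  rw [hmain]
  have harg : ∀ k : ℕ, -(γ / 2 * (k : ℝ) * (2 * σ / γ + (k : ℝ) - 1)) * t
      = -((k : ℝ) * (σ + γ / 2 * ((k : ℝ) - 1))) * t := by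
    intro k
    have hγ' : γ ≠ 0 := ne_of_gt hγ
    field_simp
    ring
  unfold FVaux.G FVaux.coef FVaux.Ak FVaux.dk FVaux.ek
  simp only [harg]
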